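/- Let a, b, k > 0, y > 0 and z > 0. With h₀(y,z) = yz/k, h₁(y,z) = (z−b)/k² + z(a+y²)(y−z)/(k²y), and h₂(y,z) = (1/(k³y³))[by(−y(1+a+y²) + 2(a+y²)z) + z(ay(y + 2y³ + z − 6y²z) + a²(y² − 2yz − z²) + y³(−2z + y(3 + y² − 4yz + z²)))], the second-order matching identity of the invariance equation for the 3D Sel'kov system holds: k·h₂(y,z)·y + (∂h₀/∂y)(y,z)·h₀(y,z) + (∂h₁/∂y)(y,z)·(az + y²z − y) + (∂h₁/∂z)(y,z)·(−az − y²z + b) = 0, where ∂/∂y and ∂/∂z denote partial derivatives. -/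

import Mathlib

noncomputable def Selkovh0 (k : ℝ) (y z : ℝ) : ℝ := y * z / k

noncomputable def Selkovh1 (a b k : ℝ) (y z : ℝ) : ℝ :=
  (z - b) / k ^ 2 + z * (a + y ^ 2) * (y - z) / (k ^ 2 * y)

noncomputable def Selkovh2 (a b k : ℝ) (y z : ℝ) : ℝ :=
  (b * y * (-y * (1 + a + y ^ 2) + 2 * (a + y ^ 2) * z) +
    z * (a * y * (y + 2 * y ^ 3 + z - 6 * y ^ 2 * z) +
      a ^ 2 * (y ^ 2 - 2 * y * z - z ^ 2) +
      y ^ 3 * (-2 * z + y * (3 + y ^ 2 - 4 * y * z + z ^ 2)))) / (k ^ 3 * y ^ 3)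

lemma h0_deriv (k z y : ℝ) (hk : k ≠ 0) :
    deriv (fun y' : ℝ => Selkovh0 k y' z) y = z / k := by
  have : (fun y' : ℝ => Selkovh0 k y' z) = fun y' : ℝ => y' * (z / k) := by
    funext y'; simp [Selkovh0]; ring
  rw [this]
  simp

lemma h1_deriv_y (a b k z y : ℝ) (hk : k ≠ 0) (hy : y ≠ 0) :
    deriv (fun y' : ℝ => Selkovh1 a b k y' z) y =
      (z * (2 * y * (y - z) + (a + y ^ 2)) * (k ^ 2 * y) -
        z * (a + y ^ 2) * (y - z) * k ^ 2) / (k ^ 2 * y) ^ 2 := by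
  have hd : HasDerivAt (fun y' : ℝ => Selkovh1 a b k y' z)
      ((z * (2 * y * (y - z) + (a + y ^ 2)) * (k ^ 2 * y) -
        z * (a + y ^ 2) * (y - z) * k ^ 2) / (k ^ 2 * y) ^ 2) y := by
    have hnum : HasDerivAt (fun y' : ℝ => z * (a + y' ^ 2) * (y' - z))
        (z * (2 * y * (y - z) + (a + y ^ 2))) y := by
      have h1 : HasDerivAt (fun y' : ℝ => z * (a + y' ^ 2)) (z * (2 * y)) y := by
        have := ((hasDerivAt_pow 2 y).const_add a).const_mul z
        simpa using this
      have h2 : HasDerivAt (fun y' : ℝ => y' - z) 1 y :=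
        (hasDerivAt_id y).sub_const z
      have := h1.mul h2
      exact this.congr_deriv (by ring)
    have hden : HasDerivAt (fun y' : ℝ => k ^ 2 * y') (k ^ 2) y := by
      simpa using (hasDerivAt_id y).const_mul (k ^ 2)
    have hq := hnum.div hden (by positivity <;> exact mul_ne_zero (pow_ne_zero 2 hk) hy)
    have := hq.const_add ((z - b) / k ^ 2)
    simpa [Selkovh1] using this
  exact hd.deriv

lemma h1_deriv_z (a b k y z : ℝ) (hk : k ≠ 0) (hy : y ≠ 0) :
    deriv (fun z' : ℝ => Selkovh1 a b k y z') z =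
      1 / k ^ 2 + (a + y ^ 2) * (y - 2 * z) / (k ^ 2 * y) := by
  have hd : HasDerivAt (fun z' : ℝ => Selkovh1 a b k y z')
      (1 / k ^ 2 + (a + y ^ 2) * (y - 2 * z) / (k ^ 2 * y)) z := by
    have h1 : HasDerivAt (fun z' : ℝ => (z' - b) / k ^ 2) (1 / k ^ 2) z := by
      simpa using ((hasDerivAt_id z).sub_const b).div_const (k ^ 2)
    have h2 : HasDerivAt (fun z' : ℝ => z' * (a + y ^ 2) * (y - z'))
        ((a + y ^ 2) * (y - z) + z * (a + y ^ 2) * (-1)) z := by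
      have ha' : HasDerivAt (fun z' : ℝ => z' * (a + y ^ 2)) (a + y ^ 2) z := by
        simpa using (hasDerivAt_id z).mul_const (a + y ^ 2)
      have hb' := (hasDerivAt_id z).const_sub y
      have := ha'.mul hb'
      exact this.congr_deriv (by simp only [id])
    have h2' := h2.div_const (k ^ 2 * y)
    have := h1.add h2'
    have heq : (fun z' : ℝ => Selkovh1 a b k y z') =
        fun z' : ℝ => (z' - b) / k ^ 2 + z' * (a + y ^ 2) * (y - z') / (k ^ 2 * y) := by
      funext z'; simp [Selkovh1]
    rw [heq]
    refine this.congr_deriv ?_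
    ring
  exact hd.deriv

/-- Second-order matching identity of the invariance equation for the 3D Sel'kov system. -/
theorem selkov_second_order_matching (a b k y z : ℝ)
    (ha : 0 < a) (hb : 0 < b) (hk : 0 < k) (hy : 0 < y) (hz : 0 < z) :
    k * Selkovh2 a b k y z * y +
      deriv (fun y' : ℝ => Selkovh0 k y' z) y * Selkovh0 k y z +
      deriv (fun y' : ℝ => Selkovh1 a b k y' z) y * (a * z + y ^ 2 * z - y) +
      deriv (fun z' : ℝ => Selkovh1 a b k y z') z * (-a * z - y ^ 2 * z + b) = 0 := by
  have hk' := hk.ne'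
  have hy' := hy.ne'
  rw [h0_deriv k z y hk', h1_deriv_y a b k z y hk' hy', h1_deriv_z a b k y z hk' hy']
  simp only [Selkovh0, Selkovh1, Selkovh2]
  field_simp
  ring
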